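/- Let G be a group, H ≤ G a subgroup, and T ≤ H a subgroup with the following property: for every g ∈ G with g⁻¹Tg ⊆ H there exists h ∈ H with g⁻¹Tg = h⁻¹Th. Then: (1) the set of T-fixed points of the left G-action on the coset space G/H, namely {gH : tgH = gH for all t ∈ T}, is exactly the image of the normalizer N_G(T) in G/H, so N_G(T) acts transitively on it; and (2) the stabilizer in N_G(T) of the base coset eH is N_H(T) = N_G(T) ∩ H. -/

import Mathlib

/-- Let `T ≤ H ≤ G` be groups such that any conjugate `g⁻¹Tg` contained in
`H` is of the form `h⁻¹Th` for some `h ∈ H`. Then (1) the `T`-fixed points in `G/H` are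
exactly the image of the normalizer `N_G(T)` (so `N_G(T)` acts transitively on them),
and (2) the stabilizer of the base coset in `N_G(T)` is `N_G(T) ∩ H`. -/
theorem stmt6 (G : Type*) [Group G] (H T : Subgroup G) (hTH : T ≤ H)
    (hconj : ∀ g : G, (∀ t ∈ T, g⁻¹ * t * g ∈ H) →
      ∃ h ∈ H, ∀ x : G, (∃ t ∈ T, x = g⁻¹ * t * g) ↔ ∃ t ∈ T, x = h⁻¹ * t * h) :
    {x : G ⧸ H | ∀ t ∈ T, t • x = x} =
        (fun n : G => (n : G ⧸ H)) '' (Subgroup.normalizer (T : Set G) : Set G) ∧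
      ∀ n ∈ Subgroup.normalizer (T : Set G),
        (n • ((1 : G) : G ⧸ H) = ((1 : G) : G ⧸ H) ↔ n ∈ Subgroup.normalizer (T : Set G) ⊓ H) := by
  constructor
  · ext x
    induction x using QuotientGroup.induction_on with
    | H g =>
      simp only [Set.mem_setOf_eq, Set.mem_image, SetLike.mem_coe]
      constructor
      · intro hfix
        have hmem : ∀ t ∈ T, g⁻¹ * t * g ∈ H := by
          intro t ht
          have h1 : t⁻¹ • ((g : G) : G ⧸ H) = (g : G ⧸ H) := hfix t⁻¹ (T.inv_mem ht)
          have h2 : ((t⁻¹ * g : G) : G ⧸ H) = (g : G ⧸ H) := h1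
          rw [QuotientGroup.eq] at h2
          have := h2
          simpa [mul_assoc] using this
        obtain ⟨h, hH, hiff⟩ := hconj g hmem
        refine ⟨g * h⁻¹, ?_, ?_⟩
        · rw [Subgroup.mem_normalizer_iff]
          intro t
          constructor
          · intro ht
            obtain ⟨t', ht', heq⟩ := (hiff (h⁻¹ * t * h)).mpr ⟨t, ht, rfl⟩
            have : g * h⁻¹ * t * (g * h⁻¹)⁻¹ = t' := by
              rw [eq_comm]
              have : t' = g * (g⁻¹ * t' * g) * g⁻¹ := by group
              rw [this, ← heq]; group
            rw [this]; exact ht'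
          · intro ht
            obtain ⟨t', ht', heq⟩ := (hiff (g⁻¹ * (g * h⁻¹ * t * (g * h⁻¹)⁻¹) * g)).mp
              ⟨_, ht, rfl⟩
            have : t = t' := by
              have : t = h * (h⁻¹ * t' * h) * h⁻¹ := by
                rw [← heq]; group
              rw [this]; group
            rw [this]; exact ht'
        · rw [QuotientGroup.eq]
          simpa using hH
      · rintro ⟨n, hn, heq⟩
        intro t ht
        rw [← heq]
        show ((t * n : G) : G ⧸ H) = (n : G ⧸ H)
        rw [QuotientGroup.eq]
        have : n⁻¹ * t⁻¹ * n ∈ T := by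
          have h' := Subgroup.mem_normalizer_iff.mp ((Subgroup.normalizer (T : Set G)).inv_mem hn) t⁻¹
          simpa using h'.mp (T.inv_mem ht)
        simpa [mul_assoc] using hTH this
  · intro n hn
    have : n • ((1 : G) : G ⧸ H) = ((n : G) : G ⧸ H) := by
      show ((n * 1 : G) : G ⧸ H) = _
      rw [mul_one]
    rw [this]
    simp [QuotientGroup.eq, Subgroup.mem_inf, hn]
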